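/- The function ζ satisfies 0 ≤ ζ(x) ≤ x²/2 for all x ≥ 0, and for every ε > 0 there exists δ > 0 such that ζ(x) ≥ x²/(2 + ε) for all x ∈ (0, δ). -/

import Mathlib

noncomputable section

open Real

/-- `ζ(x) = x·arsinh(x) + 1 − √(x² + 1)`. -/
def zeta (x : ℝ) : ℝ := x * Real.arsinh x + 1 - Real.sqrt (x ^ 2 + 1)

/-- If `f 0 = 0` and `f` has nonnegative derivative on `[0,∞)`, then `f ≥ 0` there. -/
lemma nonneg_of_deriv_aux (f f' : ℝ → ℝ) (hd : ∀ x, HasDerivAt f (f' x) x)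
    (h0 : f 0 = 0) (hp : ∀ x, 0 ≤ x → 0 ≤ f' x) : ∀ x, 0 ≤ x → 0 ≤ f x := by
  intro x hx
  have hmono : MonotoneOn f (Set.Ici (0 : ℝ)) := by
    apply monotoneOn_of_deriv_nonneg (convex_Ici 0)
    · exact (fun y _ => (hd y).continuousAt.continuousWithinAt)
    · intro y hy
      exact ((hd y).differentiableAt).differentiableWithinAt
    · intro y hy
      rw [interior_Ici] at hy
      rw [(hd y).deriv]
      exact hp y (le_of_lt hy)
  have := hmono (Set.self_mem_Ici) (Set.mem_Ici.mpr hx) hx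
  rwa [h0] at this

lemma sinh_le_mul_cosh {t : ℝ} (ht : 0 ≤ t) : Real.sinh t ≤ t * Real.cosh t := by
  have := nonneg_of_deriv_aux (fun t => t * Real.cosh t - Real.sinh t)
    (fun t => t * Real.sinh t) (fun t => by
      have h1 : HasDerivAt (fun t : ℝ => t * Real.cosh t) (1 * Real.cosh t + t * Real.sinh t) t :=
        (hasDerivAt_id t).mul (Real.hasDerivAt_cosh t)
      have := h1.sub (Real.hasDerivAt_sinh t)
      refine this.congr_deriv ?_; ring)
    (by simp) (fun t ht => mul_nonneg ht (Real.sinh_nonneg_iff.mpr ht)) t ht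
  linarith

lemma arsinh_ge {x : ℝ} (hx : 0 ≤ x) :
    x / Real.sqrt (1 + x ^ 2) ≤ Real.arsinh x := by
  have hc : Real.cosh (Real.arsinh x) = Real.sqrt (1 + x ^ 2) := Real.cosh_arsinh x
  have htpos : (0:ℝ) < Real.sqrt (1 + x ^ 2) := Real.sqrt_pos.mpr (by positivity)
  have h := sinh_le_mul_cosh (Real.arsinh_nonneg_iff.mpr hx)
  rw [Real.sinh_arsinh, hc] at h
  rw [div_le_iff₀ htpos]
  linarith [h]

lemma hasDerivAt_zeta (x : ℝ) :
    HasDerivAt zeta (Real.arsinh x + x / Real.sqrt (1 + x ^ 2)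
      - x / Real.sqrt (1 + x ^ 2)) x := by
  have h1 : HasDerivAt (fun x : ℝ => x * Real.arsinh x)
      (1 * Real.arsinh x + x * (Real.sqrt (1 + x ^ 2))⁻¹) x :=
    (hasDerivAt_id x).mul (Real.hasDerivAt_arsinh x)
  have h2 : HasDerivAt (fun x : ℝ => x ^ 2 + 1) (2 * x) x := by
    simpa using ((hasDerivAt_pow 2 x).add_const 1)
  have hne : (x:ℝ) ^ 2 + 1 ≠ 0 := by positivity
  have h3 : HasDerivAt (fun x : ℝ => Real.sqrt (x ^ 2 + 1))
      (2 * x / (2 * Real.sqrt (x ^ 2 + 1))) x :=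
    (Real.hasDerivAt_sqrt hne).comp x h2 |>.congr_deriv (by ring)
  have h4 := (h1.add_const 1).sub h3
  refine h4.congr_deriv ?_
  have hsp : (0:ℝ) < Real.sqrt (x ^ 2 + 1) := Real.sqrt_pos.mpr (by positivity)
  have hc : Real.sqrt (x ^ 2 + 1) = Real.sqrt (1 + x ^ 2) := by rw [add_comm]
  field_simp [hc]
  ring

lemma zeta_deriv (x : ℝ) : HasDerivAt zeta (Real.arsinh x) x := by
  have := hasDerivAt_zeta x
  simpa using this

lemma zeta_zero : zeta 0 = 0 := by simp [zeta]

lemma zeta_ge_sqrt {x : ℝ} (hx : 0 ≤ x) :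
    Real.sqrt (x ^ 2 + 1) - 1 ≤ zeta x := by
  have key := nonneg_of_deriv_aux (fun x => zeta x - (Real.sqrt (x ^ 2 + 1) - 1))
    (fun x => Real.arsinh x - x / Real.sqrt (1 + x ^ 2))
    (fun x => by
      have h2 : HasDerivAt (fun x : ℝ => x ^ 2 + 1) (2 * x) x := by
        simpa using ((hasDerivAt_pow 2 x).add_const 1)
      have hne : (x:ℝ) ^ 2 + 1 ≠ 0 := by positivity
      have h3 : HasDerivAt (fun x : ℝ => Real.sqrt (x ^ 2 + 1) - 1)
          (2 * x / (2 * Real.sqrt (x ^ 2 + 1))) x :=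
        ((Real.hasDerivAt_sqrt hne).comp x h2 |>.congr_deriv (by ring)).sub_const 1
      have h := (zeta_deriv x).sub h3
      refine h.congr_deriv ?_
      have hsp : (0:ℝ) < Real.sqrt (x ^ 2 + 1) := Real.sqrt_pos.mpr (by positivity)
      have hc : Real.sqrt (x ^ 2 + 1) = Real.sqrt (1 + x ^ 2) := by rw [add_comm]
      rw [hc]; field_simp)
    (by simp [zeta_zero]) (fun x hx => sub_nonneg.mpr (arsinh_ge hx)) x hx
  linarith

theorem stmt4 :
    (∀ x : ℝ, 0 ≤ x → 0 ≤ zeta x ∧ zeta x ≤ x ^ 2 / 2) ∧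
    ∀ ε : ℝ, 0 < ε → ∃ δ : ℝ, 0 < δ ∧ ∀ x : ℝ, 0 < x → x < δ →
      zeta x ≥ x ^ 2 / (2 + ε) := by
  constructor
  · intro x hx
    constructor
    · have h1 := zeta_ge_sqrt hx
      have h2 : (1:ℝ) ≤ Real.sqrt (x ^ 2 + 1) := by
        have hsq : Real.sqrt (x ^ 2 + 1) ^ 2 = x ^ 2 + 1 := Real.sq_sqrt (by positivity)
        nlinarith [Real.sqrt_nonneg (x ^ 2 + 1), sq_nonneg x]
      linarith
    · -- upper bound via derivative
      have key := nonneg_of_deriv_aux (fun x => x ^ 2 / 2 - zeta x)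
        (fun x => x - Real.arsinh x)
        (fun x => by
          have h1 : HasDerivAt (fun x : ℝ => x ^ 2 / 2) (2 * x ^ 1 / 2) x :=
            (hasDerivAt_pow 2 x).div_const 2
          have h := h1.sub (zeta_deriv x)
          refine h.congr_deriv ?_; ring)
        (by simp [zeta_zero])
        (fun x hx => by
          have : Real.arsinh x ≤ Real.arsinh (Real.sinh x) :=
            Real.arsinh_le_arsinh.mpr (Real.self_le_sinh_iff.mpr hx)
          rw [Real.arsinh_sinh] at this
          linarith) x hx
      linarith
  · intro ε hε
    refine ⟨min ε 1, lt_min hε one_pos, fun x hx hxδ => ?_⟩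
    have hx0 : (0:ℝ) ≤ x := le_of_lt hx
    have h1 := zeta_ge_sqrt hx0
    have hs : Real.sqrt (x ^ 2 + 1) ≤ 1 + ε := by
      rw [show (1:ℝ) + ε = Real.sqrt ((1 + ε) ^ 2) from
        (Real.sqrt_sq (by linarith)).symm]
      apply Real.sqrt_le_sqrt
      have hx1 : x < 1 := lt_of_lt_of_le hxδ (min_le_right _ _)
      have hxε : x < ε := lt_of_lt_of_le hxδ (min_le_left _ _)
      nlinarith
    have hsq : Real.sqrt (x ^ 2 + 1) ^ 2 = x ^ 2 + 1 :=
      Real.sq_sqrt (by positivity)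
    have hsp : (1:ℝ) ≤ Real.sqrt (x ^ 2 + 1) := by
      nlinarith [Real.sqrt_nonneg (x ^ 2 + 1), sq_nonneg x]
    -- sqrt(x²+1) - 1 = x² / (sqrt(x²+1)+1) ≥ x² / (2+ε)
    have hrew : Real.sqrt (x ^ 2 + 1) - 1
        = x ^ 2 / (Real.sqrt (x ^ 2 + 1) + 1) := by
      rw [eq_div_iff (by linarith)]
      nlinarith
    have hdiv : x ^ 2 / (2 + ε) ≤ x ^ 2 / (Real.sqrt (x ^ 2 + 1) + 1) := by
      apply div_le_div_of_nonneg_left (by positivity) (by linarith) (by linarith)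
    rw [ge_iff_le]
    calc x ^ 2 / (2 + ε) ≤ x ^ 2 / (Real.sqrt (x ^ 2 + 1) + 1) := hdiv
      _ = Real.sqrt (x ^ 2 + 1) - 1 := hrew.symm
      _ ≤ zeta x := h1

end
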